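/- Suppose Assumption G holds (each u_i is upper semicontinuous, concave, u_i(x⁰_i) finite, and u_i(x + r·g) > u_i(x) whenever u_i(x) > −∞ and r > 0) and Assumption R holds: whenever x ∈ (ℝ^J)^I satisfies ∑_i x_i = 0 and u_i^∞(x_i) ≥ 0 for all i, then x = 0, where u_i^∞(y) := inf_{α>0} (u_i(x⁰_i + α·y) − u_i(x⁰_i))/α. Then the market clearing problem (P) attains its supremum: there exists x̄ ∈ (ℝ^J)^I with ∑_i x̄_i = 0 and ∑_i D_i(x̄_i) = sup{∑_i D_i(x_i) : ∑_i x_i = 0}. -/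

import Mathlib

open scoped BigOperators
open Metric Filter

noncomputable section

/-- The inner product `p·y = ∑ j, p j * y j`. -/
def dotp {J : Type*} [Fintype J] (p y : EuclideanSpace ℝ J) : ℝ := ∑ j, p j * y j

/-- A function `u : ℝ^J → ℝ ∪ {±∞}` is concave iff its hypograph is convex. -/
def HypoConcave {J : Type*} [Fintype J] (u : EuclideanSpace ℝ J → EReal) : Prop :=
  Convex ℝ {q : EuclideanSpace ℝ J × ℝ | (q.2 : EReal) ≤ u q.1}

/-- Indifference price function `D(x) = sup {r ∈ ℝ : u(x⁰ + x − r·g) ≥ u(x⁰)}`,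
the supremum being taken in `ℝ ∪ {±∞}`. -/
def indiff {J : Type*} [Fintype J] (u : EuclideanSpace ℝ J → EReal)
    (x0 g x : EuclideanSpace ℝ J) : EReal :=
  sSup {e : EReal | ∃ r : ℝ, e = (r : EReal) ∧ u x0 ≤ u (x0 + x - r • g)}

/-- `p` is a supergradient of `D` at `xb`: `D xb` is finite and
`D x ≤ D xb + p·(x − xb)` for all `x`. -/
def IsSupergradient {J : Type*} [Fintype J] (D : EuclideanSpace ℝ J → EReal)
    (p xb : EuclideanSpace ℝ J) : Prop :=
  D xb ≠ ⊥ ∧ D xb ≠ ⊤ ∧ ∀ x, D x ≤ D xb + ((dotp p (x - xb) : ℝ) : EReal)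

/-- Optimal value `v(z)` of the perturbed market clearing problem `(P_z)`. -/
def marketValue {I J : Type*} [Fintype I] [Fintype J]
    (D : I → EuclideanSpace ℝ J → EReal) (z : EuclideanSpace ℝ J) : EReal :=
  sSup {e : EReal | ∃ x : I → EuclideanSpace ℝ J, (∑ i, x i) = z ∧ e = ∑ i, D i (x i)}

/-- Optimal value of problem `(P')`, the total consumer surplus at allocation `w`. -/
def CSval {I J : Type*} [Fintype I] [Fintype J]
    (u : I → EuclideanSpace ℝ J → EReal) (g : EuclideanSpace ℝ J)
    (w : I → EuclideanSpace ℝ J) : EReal :=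
  sSup {e : EReal | ∃ s : ℝ, e = (s : EReal) ∧ ∃ z : I → EuclideanSpace ℝ J,
    (∑ i, z i) + s • g = ∑ i, w i ∧ ∀ i, u i (w i) ≤ u i (z i)}

/-- Recession function `u^∞(y) = inf_{α>0} (u(x⁰ + α·y) − u(x⁰))/α`. -/
def recession {J : Type*} [Fintype J] (u : EuclideanSpace ℝ J → EReal)
    (x0 y : EuclideanSpace ℝ J) : EReal :=
  sInf {e : EReal | ∃ α : ℝ, 0 < α ∧ e = (u (x0 + α • y) - u x0) / (α : EReal)}

/-- Pareto efficiency of an allocation `x` with total endowment `∑ i, x i`. -/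
def ParetoEfficient {I J : Type*} [Fintype I] [Fintype J]
    (u : I → EuclideanSpace ℝ J → EReal) (x : I → EuclideanSpace ℝ J) : Prop :=
  ¬ ∃ x' : I → EuclideanSpace ℝ J, (∑ i, x' i) = (∑ i, x i) ∧
      (∀ i, u i (x i) ≤ u i (x' i)) ∧ ∃ i, u i (x i) < u i (x' i)

/-- Theorem exist: existence of solutions to the market clearing problem. -/
lemma ereal_coe_sum {ι : Type*} (s : Finset ι) (f : ι → ℝ) :
    ((∑ i ∈ s, f i : ℝ) : EReal) = ∑ i ∈ s, ((f i : ℝ) : EReal) :=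
  map_sum (⟨⟨Real.toEReal, EReal.coe_zero⟩, EReal.coe_add⟩ : ℝ →+ EReal) f s

lemma ereal_sum_bot {ι : Type*} (s : Finset ι) (f : ι → EReal) {i : ι} (hi : i ∈ s)
    (hf : f i = ⊥) : ∑ k ∈ s, f k = ⊥ := by
  classical
  rw [← Finset.add_sum_erase _ _ hi, hf, EReal.bot_add]

lemma superlevel_convex {V : Type*} [AddCommGroup V] [Module ℝ V] {u : V → EReal}
    (hc : Convex ℝ {q : V × ℝ | (q.2 : EReal) ≤ u q.1}) (c : ℝ) :
    Convex ℝ {x | (c : EReal) ≤ u x} := by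
  intro x hx y hy a b ha hb hab
  have h3 := hc (show ((x, c) : V × ℝ) ∈ _ from hx) (show ((y, c) : V × ℝ) ∈ _ from hy) ha hb hab
  have heq : a • ((x, c) : V × ℝ) + b • (y, c) = (a • x + b • y, c) := by
    rw [Prod.smul_mk, Prod.smul_mk, Prod.mk_add_mk, smul_eq_mul, smul_eq_mul, ← add_mul, hab,
      one_mul]
  rw [heq] at h3
  exact h3

lemma ereal_sub_div_nonneg (a : EReal) (r : ℝ) (h : (r:EReal) ≤ a) (α : ℝ) (hα : 0 < α) :
    0 ≤ (a - (r:EReal)) / (α : EReal) := by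
  refine EReal.div_nonneg ?_ (by exact_mod_cast hα.le)
  rw [EReal.le_sub_iff_add_le (Or.inl (EReal.coe_ne_bot r)) (Or.inl (EReal.coe_ne_top r)), zero_add]
  exact h

lemma exists_recession_dir {V : Type*} [NormedAddCommGroup V] [NormedSpace ℝ V] [ProperSpace V]
    {B : Set V} (hcl : IsClosed B) (hco : Convex ℝ B) (h0 : (0:V) ∈ B)
    (hub : ¬ Bornology.IsBounded B) :
    ∃ d : V, d ≠ 0 ∧ ∀ t : ℝ, 0 ≤ t → t • d ∈ B := by
  rw [isBounded_iff_forall_norm_le] at hub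
  push_neg at hub
  choose b hbB hbn using fun n : ℕ => hub n
  have hbpos : ∀ n, (0:ℝ) < ‖b n‖ := fun n => lt_of_le_of_lt (Nat.cast_nonneg n) (hbn n)
  set d : ℕ → V := fun n => ‖b n‖⁻¹ • b n with hd
  have hdsph : ∀ n, d n ∈ sphere (0:V) 1 := by
    intro n
    simp [hd, norm_smul, abs_of_pos (inv_pos.2 (hbpos n)), inv_mul_cancel₀ (hbpos n).ne']
  obtain ⟨a, hasph, φ, hφ, hlim⟩ := (isCompact_sphere (0:V) 1).tendsto_subseq hdsph
  refine ⟨a, ?_, ?_⟩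
  · intro h
    rw [h] at hasph
    simp at hasph
  · intro t ht
    have hmem : ∀ᶠ n in atTop, t • (d ∘ φ) n ∈ B := by
      filter_upwards [eventually_ge_atTop (Nat.ceil t)] with n hn
      have htn : t ≤ ‖b (φ n)‖ := by
        calc t ≤ (Nat.ceil t : ℝ) := Nat.le_ceil t
        _ ≤ (φ n : ℝ) := by exact_mod_cast le_trans hn (hφ.le_apply)
        _ ≤ ‖b (φ n)‖ := (hbn (φ n)).le
      have hθ : t / ‖b (φ n)‖ ∈ Set.Icc (0:ℝ) 1 := by
        constructor
        · positivity
        · rw [div_le_one (hbpos (φ n))]; exact htn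
      have : t • (d ∘ φ) n = (1 - t/‖b (φ n)‖) • (0:V) + (t/‖b (φ n)‖) • b (φ n) := by
        simp [hd, smul_smul, div_eq_mul_inv]
      rw [this]
      exact hco h0 (hbB (φ n)) (by linarith [hθ.2]) hθ.1 (by ring)
    have : Tendsto (fun n => t • (d ∘ φ) n) atTop (nhds (t • a)) := (hlim.const_smul t)
    exact hcl.mem_of_tendsto this hmem

theorem market_clearing_exists
    {I J : Type*} [Fintype I] [Nonempty I] [Fintype J] [Nonempty J]
    (u : I → EuclideanSpace ℝ J → EReal) (g : EuclideanSpace ℝ J)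
    (x0 : I → EuclideanSpace ℝ J)
    (husc : ∀ i, UpperSemicontinuous (u i))
    (hconc : ∀ i, HypoConcave (u i))
    (hne_top : ∀ i x, u i x ≠ ⊤)
    (hfin : ∀ i, u i (x0 i) ≠ ⊥)
    (hmono : ∀ i, ∀ x : EuclideanSpace ℝ J, ∀ r : ℝ, u i x ≠ ⊥ → 0 < r →
      u i x < u i (x + r • g))
    (hrec : ∀ x : I → EuclideanSpace ℝ J, (∑ i, x i) = 0 →
      (∀ i, 0 ≤ recession (u i) (x0 i) (x i)) → x = 0) :
    ∃ xb : I → EuclideanSpace ℝ J, (∑ i, xb i) = 0 ∧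
      (∑ i, indiff (u i) (x0 i) g (xb i)) =
        marketValue (fun i => indiff (u i) (x0 i) g) 0 := by
  classical
  obtain ⟨i0⟩ := (inferInstance : Nonempty I)
  have hfin' : ∀ i, ∃ c : ℝ, u i (x0 i) = (c : EReal) :=
    fun i => ⟨(u i (x0 i)).toReal, (EReal.coe_toReal (hne_top i _) (hfin i)).symm⟩
  -- the feasible set A and its truncation B
  set A : Set ((I → EuclideanSpace ℝ J) × ℝ) :=
    {p | ((∑ i, p.1 i) + p.2 • g = 0) ∧ ∀ i, u i (x0 i) ≤ u i (x0 i + p.1 i)} with hAdef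
  set B : Set ((I → EuclideanSpace ℝ J) × ℝ) := A ∩ {p | 0 ≤ p.2} with hBdef
  have hAcl : IsClosed A := by
    have h1 : IsClosed {p : (I → EuclideanSpace ℝ J) × ℝ | (∑ i, p.1 i) + p.2 • g = 0} :=
      isClosed_eq ((continuous_finset_sum _ fun i _ => (continuous_apply i).comp
        continuous_fst).add (continuous_snd.smul continuous_const)) continuous_const
    have h2 : ∀ i, IsClosed {p : (I → EuclideanSpace ℝ J) × ℝ |
        u i (x0 i) ≤ u i (x0 i + p.1 i)} := by
      intro i
      have hcl := upperSemicontinuous_iff_isClosed_preimage.1 (husc i) (u i (x0 i))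
      have hset : {p : (I → EuclideanSpace ℝ J) × ℝ | u i (x0 i) ≤ u i (x0 i + p.1 i)} =
          (fun p : (I → EuclideanSpace ℝ J) × ℝ => x0 i + p.1 i) ⁻¹'
            (u i ⁻¹' Set.Ici (u i (x0 i))) := rfl
      rw [hset]
      exact hcl.preimage (continuous_const.add ((continuous_apply i).comp continuous_fst))
    have hAeq : A = {p : (I → EuclideanSpace ℝ J) × ℝ | (∑ i, p.1 i) + p.2 • g = 0} ∩
        ⋂ i, {p | u i (x0 i) ≤ u i (x0 i + p.1 i)} := by
      ext p
      simp only [hAdef, Set.mem_setOf_eq, Set.mem_inter_iff, Set.mem_iInter]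
    rw [hAeq]
    exact h1.inter (isClosed_iInter h2)
  have hAco : Convex ℝ A := by
    intro p hp q hq a b ha hb hab
    obtain ⟨hp1, hp2⟩ := hp
    obtain ⟨hq1, hq2⟩ := hq
    constructor
    · show (∑ i, (a • p.1 i + b • q.1 i)) + (a * p.2 + b * q.2) • g = 0
      have : (∑ i, (a • p.1 i + b • q.1 i)) + (a * p.2 + b * q.2) • g
           = a • ((∑ i, p.1 i) + p.2 • g) + b • ((∑ i, q.1 i) + q.2 • g) := by
        rw [Finset.sum_add_distrib, ← Finset.smul_sum, ← Finset.smul_sum]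
        module
      rw [this, hp1, hq1, smul_zero, smul_zero, add_zero]
    · intro i
      obtain ⟨c, hc⟩ := hfin' i
      have hxp : (x0 i + p.1 i) ∈ {z | (c:EReal) ≤ u i z} := by
        rw [Set.mem_setOf_eq, ← hc]; exact hp2 i
      have hxq : (x0 i + q.1 i) ∈ {z | (c:EReal) ≤ u i z} := by
        rw [Set.mem_setOf_eq, ← hc]; exact hq2 i
      have h3 := superlevel_convex (hconc i) c hxp hxq ha hb hab
      have heq : a • (x0 i + p.1 i) + b • (x0 i + q.1 i) = x0 i + (a • p.1 i + b • q.1 i) := by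
        rw [smul_add, smul_add, add_add_add_comm, ← add_smul, hab, one_smul]
      rw [heq] at h3
      show u i (x0 i) ≤ u i (x0 i + (a • p.1 i + b • q.1 i))
      rw [hc]
      exact h3
  have h0B : ((0, 0) : (I → EuclideanSpace ℝ J) × ℝ) ∈ B := by
    refine ⟨⟨?_, ?_⟩, le_refl (0:ℝ)⟩
    · simp
    · intro i; simp
  have hBcl : IsClosed B := hAcl.inter (isClosed_le continuous_const continuous_snd)
  have hBco : Convex ℝ B := by
    refine hAco.inter ?_
    intro p hp q hq a b ha hb hab
    exact add_nonneg (mul_nonneg ha hp) (mul_nonneg hb hq)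
  -- B is bounded
  have hBbd : Bornology.IsBounded B := by
    by_contra hub
    obtain ⟨d, hd0, hdB⟩ := exists_recession_dir hBcl hBco h0B hub
    have hmem : ∀ t : ℝ, 0 ≤ t →
        (((∑ i, t • d.1 i) + (t * d.2) • g = 0) ∧
          (∀ i, u i (x0 i) ≤ u i (x0 i + t • d.1 i))) ∧ 0 ≤ t * d.2 :=
      fun t ht => hdB t ht
    have hσ : 0 ≤ d.2 := by simpa using (hmem 1 zero_le_one).2
    have hcard : (0:ℝ) < (Fintype.card I : ℝ) := by exact_mod_cast Fintype.card_pos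
    have hsum : (∑ i, (d.1 i + (d.2 / (Fintype.card I : ℝ)) • g)) = 0 := by
      have h1 := (hmem 1 zero_le_one).1.1
      simp only [one_smul, one_mul] at h1
      rw [Finset.sum_add_distrib, Finset.sum_const, Finset.card_univ,
        ← Nat.cast_smul_eq_nsmul ℝ, smul_smul, mul_div_cancel₀ _ hcard.ne']
      exact h1
    have hrpos : ∀ i, 0 ≤ recession (u i) (x0 i) (d.1 i + (d.2 / (Fintype.card I : ℝ)) • g) := by
      intro i
      refine le_sInf ?_
      rintro e ⟨α, hα, rfl⟩
      obtain ⟨cu, hcu⟩ := hfin' i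
      rw [hcu]
      refine ereal_sub_div_nonneg _ cu ?_ α hα
      rw [← hcu]
      have hyle : u i (x0 i) ≤ u i (x0 i + α • d.1 i) := (hmem α hα.le).1.2 i
      have hrw : x0 i + α • (d.1 i + (d.2 / (Fintype.card I:ℝ)) • g)
          = (x0 i + α • d.1 i) + (α * (d.2 / (Fintype.card I:ℝ))) • g := by
        rw [smul_add, smul_smul, add_assoc]
      rw [hrw]
      rcases (mul_nonneg hα.le (div_nonneg hσ hcard.le)).lt_or_eq with hpos | hzero
      · refine hyle.trans (hmono i _ _ ?_ hpos).le
        exact ((Ne.bot_lt (hfin i)).trans_le hyle).ne'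
      · rw [← hzero, zero_smul, add_zero]
        exact hyle
    have hx0' := hrec _ hsum hrpos
    have hyi : ∀ i, d.1 i = -((d.2 / (Fintype.card I:ℝ)) • g) := by
      intro i
      exact eq_neg_of_add_eq_zero_left (congrFun hx0' i)
    rcases hσ.lt_or_eq with hσpos | hσ0
    · -- 0 < d.2 : contradiction with monotonicity
      have hcpos : 0 < d.2 / (Fintype.card I:ℝ) := div_pos hσpos hcard
      have hmem1 := (hmem 1 zero_le_one).1.2 i0
      rw [one_smul, hyi i0] at hmem1
      have hneb : u i0 (x0 i0 + -((d.2 / (Fintype.card I:ℝ)) • g)) ≠ ⊥ :=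
        ((Ne.bot_lt (hfin i0)).trans_le hmem1).ne'
      have hlt := hmono i0 (x0 i0 + -((d.2 / (Fintype.card I:ℝ)) • g))
        (d.2 / (Fintype.card I:ℝ)) hneb hcpos
      rw [add_assoc, neg_add_cancel, add_zero] at hlt
      exact absurd (hmem1.trans_lt hlt) (lt_irrefl _)
    · -- d.2 = 0 : then d = 0
      apply hd0
      have hfst : d.1 = 0 := funext fun i => by rw [hyi i, ← hσ0]; simp
      exact Prod.ext hfst hσ0.symm
  have hBcp : IsCompact B := Metric.isCompact_of_isClosed_isBounded hBcl hBbd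
  obtain ⟨pbar, hpB, hpmax⟩ := hBcp.exists_isMaxOn ⟨(0,0), h0B⟩
    (continuous_snd.continuousOn : ContinuousOn (fun p : (I → EuclideanSpace ℝ J) × ℝ => p.2) B)
  have hmax : ∀ q ∈ B, q.2 ≤ pbar.2 := fun q hq => isMaxOn_iff.1 hpmax q hq
  have hsbar0 : 0 ≤ pbar.2 := hmax (0,0) h0B
  have hubA : ∀ p ∈ A, p.2 ≤ pbar.2 := by
    intro p hp
    rcases le_or_gt 0 p.2 with h | h
    · exact hmax p ⟨hp, h⟩
    · exact h.le.trans hsbar0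
  -- upper bound claim
  have claim_ub : ∀ x : I → EuclideanSpace ℝ J, (∑ i, x i) = 0 →
      (∑ i, indiff (u i) (x0 i) g (x i)) ≤ (pbar.2 : EReal) := by
    intro x hx
    by_cases hbot : ∃ i, indiff (u i) (x0 i) g (x i) = ⊥
    · obtain ⟨i, hi⟩ := hbot
      rw [ereal_sum_bot Finset.univ _ (Finset.mem_univ i) hi]
      exact bot_le
    push_neg at hbot
    set R : I → Set ℝ := fun i => {r : ℝ | u i (x0 i) ≤ u i (x0 i + x i - r • g)} with hRdef
    have hRne : ∀ i, (R i).Nonempty := by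
      intro i
      by_contra hemp
      apply hbot i
      have hset : {e : EReal | ∃ r : ℝ, e = (r:EReal) ∧
          u i (x0 i) ≤ u i (x0 i + x i - r • g)} = ∅ := by
        ext e
        simp only [Set.mem_setOf_eq, Set.mem_empty_iff_false, iff_false]
        rintro ⟨r, rfl, hc⟩
        exact hemp ⟨r, hc⟩
      show sSup _ = ⊥
      rw [hset, sSup_empty]
    choose ρ hρ using hRne
    have fact : ∀ r : I → ℝ, (∀ i, r i ∈ R i) → (∑ i, r i) ≤ pbar.2 := by
      intro r hr
      refine hubA (fun i => x i - r i • g, ∑ i, r i) ⟨?_, ?_⟩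
      · show (∑ i, (x i - r i • g)) + (∑ i, r i) • g = 0
        rw [Finset.sum_sub_distrib, ← Finset.sum_smul, hx]
        abel
      · intro i
        show u i (x0 i) ≤ u i (x0 i + (x i - r i • g))
        rw [← add_sub_assoc]
        exact hr i
    have hbdd : ∀ i, BddAbove (R i) := by
      intro i
      refine ⟨pbar.2 - (∑ k ∈ Finset.univ \ {i}, ρ k), fun r hr => ?_⟩
      have hupd : ∀ k, (Function.update ρ i r) k ∈ R k := by
        intro k
        rcases eq_or_ne k i with rfl | hk
        · rw [Function.update_self]; exact hr
        · rw [Function.update_of_ne hk]; exact hρ k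
      have hf := fact _ hupd
      rw [Finset.sum_update_of_mem (Finset.mem_univ i)] at hf
      linarith
    have hsum_m : (∑ i, sSup (R i)) ≤ pbar.2 := by
      by_contra hlt
      push_neg at hlt
      set δ : ℝ := ((∑ i, sSup (R i)) - pbar.2) / ((Fintype.card I : ℝ) + 1) with hδdef
      have hδpos : 0 < δ := by
        apply div_pos (by linarith) (by positivity)
      have hpick : ∀ i, ∃ r ∈ R i, sSup (R i) - δ < r := by
        intro i
        exact exists_lt_of_lt_csSup ⟨ρ i, hρ i⟩ (by linarith)
      choose r hrR hrlt using hpick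
      have h1 := fact r hrR
      have h2 : (∑ i, (sSup (R i) - δ)) < ∑ i, r i :=
        Finset.sum_lt_sum_of_nonempty Finset.univ_nonempty (fun i _ => hrlt i)
      rw [Finset.sum_sub_distrib, Finset.sum_const, Finset.card_univ, nsmul_eq_mul] at h2
      have hδeq : ((Fintype.card I : ℝ) + 1) * δ = (∑ i, sSup (R i)) - pbar.2 := by
        rw [hδdef]
        field_simp
      linarith
    have hle : ∀ i, indiff (u i) (x0 i) g (x i) ≤ ((sSup (R i) : ℝ) : EReal) := by
      intro i
      refine sSup_le ?_
      rintro e ⟨rr, rfl, hcond⟩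
      exact EReal.coe_le_coe_iff.2 (le_csSup (hbdd i) hcond)
    calc (∑ i, indiff (u i) (x0 i) g (x i)) ≤ ∑ i, ((sSup (R i) : ℝ) : EReal) :=
          Finset.sum_le_sum (fun i _ => hle i)
      _ = ((∑ i, sSup (R i) : ℝ) : EReal) := (ereal_coe_sum _ _).symm
      _ ≤ (pbar.2 : EReal) := EReal.coe_le_coe_iff.2 hsum_m
  -- construct the optimal point
  set xb : I → EuclideanSpace ℝ J :=
    fun i => pbar.1 i + (if i = i0 then pbar.2 else 0) • g with hxbdef
  have hsumxb : (∑ i, xb i) = 0 := by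
    have h1 : (∑ i, xb i) = (∑ i, pbar.1 i) + pbar.2 • g := by
      show (∑ i, (pbar.1 i + (if i = i0 then pbar.2 else 0 : ℝ) • g)) =
        (∑ i, pbar.1 i) + pbar.2 • g
      rw [Finset.sum_add_distrib, ← Finset.sum_smul]
      congr 2
      simp [Finset.sum_ite_eq' Finset.univ i0]
    rw [h1]
    exact hpB.1.1
  have hDlow : ∀ i, ((if i = i0 then pbar.2 else 0 : ℝ) : EReal) ≤
      indiff (u i) (x0 i) g (xb i) := by
    intro i
    apply le_sSup
    refine ⟨(if i = i0 then pbar.2 else 0 : ℝ), rfl, ?_⟩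
    have heq2 : x0 i + xb i - (if i = i0 then pbar.2 else 0 : ℝ) • g = x0 i + pbar.1 i := by
      show x0 i + (pbar.1 i + (if i = i0 then pbar.2 else 0 : ℝ) • g) -
        (if i = i0 then pbar.2 else 0 : ℝ) • g = x0 i + pbar.1 i
      abel
    rw [heq2]
    exact hpB.1.2 i
  have hge : (pbar.2 : EReal) ≤ ∑ i, indiff (u i) (x0 i) g (xb i) := by
    calc (pbar.2 : EReal) = ((∑ i, if i = i0 then pbar.2 else 0 : ℝ) : EReal) := by
          rw [Finset.sum_ite_eq' Finset.univ i0]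
          simp
      _ = ∑ i, ((if i = i0 then pbar.2 else 0 : ℝ) : EReal) := ereal_coe_sum _ _
      _ ≤ _ := Finset.sum_le_sum fun i _ => hDlow i
  have heqv : (∑ i, indiff (u i) (x0 i) g (xb i)) = (pbar.2 : EReal) :=
    le_antisymm (claim_ub xb hsumxb) hge
  refine ⟨xb, hsumxb, ?_⟩
  rw [heqv]
  apply le_antisymm
  · exact le_sSup ⟨xb, hsumxb, heqv.symm⟩
  · refine sSup_le ?_
    rintro e ⟨x, hx, rfl⟩
    exact claim_ub x hx
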